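/- Let μ > 0, γ > 0 with γ ≥ √μ/2, and let x, u* ∈ ℝ. Then u* is a global minimizer of the proximal cost function g(u) = (x − u)²/(2μ) − log(γ/(γ² + u²)) if and only if u* satisfies the cubic equation u*³ − x·u*² + (γ² + 2μ)·u* − x·γ² = 0. -/

import Mathlib

/-- For μ > 0, γ > 0 with γ ≥ √μ/2 and x, u* ∈ ℝ, u* minimizes the proximal
cost g(u) = (x − u)²/(2μ) − log(γ/(γ² + u²)) globally iff u* satisfies the
cubic u*³ − x·u*² + (γ² + 2μ)·u* − x·γ² = 0. -/
theorem cauchy_prox_min_iff_cubic (μ γ x uStar : ℝ) (hμ : 0 < μ) (hγ : 0 < γ)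
    (hcond : Real.sqrt μ / 2 ≤ γ) :
    (∀ u : ℝ,
      (x - uStar) ^ 2 / (2 * μ) - Real.log (γ / (γ ^ 2 + uStar ^ 2)) ≤
        (x - u) ^ 2 / (2 * μ) - Real.log (γ / (γ ^ 2 + u ^ 2))) ↔
    uStar ^ 3 - x * uStar ^ 2 + (γ ^ 2 + 2 * μ) * uStar - x * γ ^ 2 = 0 := by
  have hpos : ∀ u : ℝ, (0:ℝ) < γ ^ 2 + u ^ 2 := fun u => by positivity
  have hquarter : μ ≤ 4 * γ ^ 2 := by
    have h1 : Real.sqrt μ ≤ 2 * γ := by linarith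
    have h2 : Real.sqrt μ ^ 2 = μ := Real.sq_sqrt hμ.le
    nlinarith [Real.sqrt_nonneg μ]
  set g : ℝ → ℝ := fun u => (x - u) ^ 2 / (2 * μ) - Real.log (γ / (γ ^ 2 + u ^ 2))
    with hgdef
  -- derivative of g
  have hderiv : ∀ u : ℝ, HasDerivAt g ((u - x) / μ + 2 * u / (γ ^ 2 + u ^ 2)) u := by
    intro u
    have h1 : HasDerivAt (fun u : ℝ => (x - u) ^ 2 / (2 * μ))
        ((2 * (x - u) ^ 1 * (0 - 1)) / (2 * μ)) u :=
      (((hasDerivAt_const u x).sub (hasDerivAt_id u)).pow 2).div_const (2 * μ)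
    have h2 : HasDerivAt (fun u : ℝ => γ ^ 2 + u ^ 2) (0 + 2 * u ^ 1) u :=
      (hasDerivAt_const u (γ ^ 2)).add (hasDerivAt_pow 2 u)
    have h3 : HasDerivAt (fun u : ℝ => Real.log (γ ^ 2 + u ^ 2))
        ((0 + 2 * u ^ 1) / (γ ^ 2 + u ^ 2)) u := h2.log (hpos u).ne'
    have h4 : HasDerivAt (fun u : ℝ =>
        (x - u) ^ 2 / (2 * μ) - (Real.log γ - Real.log (γ ^ 2 + u ^ 2)))
        ((2 * (x - u) ^ 1 * (0 - 1)) / (2 * μ) - (0 - (0 + 2 * u ^ 1) / (γ ^ 2 + u ^ 2))) u :=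
      h1.sub ((hasDerivAt_const u (Real.log γ)).sub h3)
    have heq : g = fun u : ℝ =>
        (x - u) ^ 2 / (2 * μ) - (Real.log γ - Real.log (γ ^ 2 + u ^ 2)) := by
      funext v
      show (x - v) ^ 2 / (2 * μ) - Real.log (γ / (γ ^ 2 + v ^ 2)) = _
      rw [Real.log_div hγ.ne' (hpos v).ne']
    rw [heq]
    convert h4 using 1
    field_simp
    ring
  constructor
  · -- minimum implies cubic
    intro hmin
    have hloc : IsLocalMin g uStar := Filter.Eventually.of_forall hmin
    have h0 : (uStar - x) / μ + 2 * uStar / (γ ^ 2 + uStar ^ 2) = 0 :=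
      hloc.hasDerivAt_eq_zero (hderiv uStar)
    have h0' : (uStar - x) * (γ ^ 2 + uStar ^ 2) + 2 * uStar * μ = 0 := by
      field_simp at h0
      linarith [h0]
    nlinarith [h0']
  · -- cubic implies minimum
    intro hcubic u
    -- Q(v) ≥ 0
    have hQ : ∀ v : ℝ, 0 ≤ (γ ^ 2 + uStar ^ 2) * v ^ 2 - 2 * μ * uStar * v
        + γ ^ 2 * (γ ^ 2 + uStar ^ 2) + 2 * μ * γ ^ 2 := by
      intro v
      have hs := hpos uStar
      have hsQ : 0 ≤ (γ ^ 2 + uStar ^ 2) * ((γ ^ 2 + uStar ^ 2) * v ^ 2 - 2 * μ * uStar * v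
          + γ ^ 2 * (γ ^ 2 + uStar ^ 2) + 2 * μ * γ ^ 2) := by
        nlinarith [sq_nonneg ((γ ^ 2 + uStar ^ 2) * v - μ * uStar),
          mul_nonneg (by linarith : (0:ℝ) ≤ 4 * γ ^ 2 - μ)
            (sq_nonneg (γ ^ 2 + uStar ^ 2 + μ)),
          mul_nonneg hμ.le (sq_nonneg (γ ^ 2 + uStar ^ 2 - μ))]
      nlinarith [hsQ, hs]
    -- sign of the cubic c(v) = (v - x)(γ² + v²) + 2μv
    have hsign : ∀ v : ℝ, (γ ^ 2 + uStar ^ 2) * ((v - x) * (γ ^ 2 + v ^ 2) + 2 * μ * v)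
        = (v - uStar) * ((γ ^ 2 + uStar ^ 2) * v ^ 2 - 2 * μ * uStar * v
          + γ ^ 2 * (γ ^ 2 + uStar ^ 2) + 2 * μ * γ ^ 2) := by
      intro v
      linear_combination (γ ^ 2 + v ^ 2) * hcubic
    have hderiv_eq : ∀ v : ℝ, deriv g v = ((v - x) * (γ ^ 2 + v ^ 2) + 2 * μ * v)
        / (μ * (γ ^ 2 + v ^ 2)) := by
      intro v
      rw [(hderiv v).deriv]
      field_simp
    have hcont : ContinuousOn g Set.univ :=
      fun v _ => (hderiv v).differentiableAt.continuousAt.continuousWithinAt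
    have hdiff : ∀ s : Set ℝ, DifferentiableOn ℝ g s :=
      fun s v _ => (hderiv v).differentiableAt.differentiableWithinAt
    rcases le_total u uStar with hle | hle
    · -- g antitone on Iic uStar
      have hanti : AntitoneOn g (Set.Iic uStar) := by
        apply antitoneOn_of_deriv_nonpos (convex_Iic uStar) (hcont.mono (Set.subset_univ _))
          (hdiff _)
        intro v hv
        rw [interior_Iic] at hv
        rw [hderiv_eq v]
        apply div_nonpos_of_nonpos_of_nonneg _ (by positivity)
        have h1 := hsign v
        have h2 := hQ v
        nlinarith [hpos uStar, mul_nonneg h2 (by linarith [hv.out] : (0:ℝ) ≤ uStar - v)]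
      exact hanti hle Set.self_mem_Iic hle
    · -- g monotone on Ici uStar
      have hmono : MonotoneOn g (Set.Ici uStar) := by
        apply monotoneOn_of_deriv_nonneg (convex_Ici uStar) (hcont.mono (Set.subset_univ _))
          (hdiff _)
        intro v hv
        rw [interior_Ici] at hv
        rw [hderiv_eq v]
        apply div_nonneg _ (by positivity)
        have h1 := hsign v
        have h2 := hQ v
        nlinarith [hpos uStar, mul_nonneg h2 (by linarith [hv.out] : (0:ℝ) ≤ v - uStar)]
      exact hmono Set.self_mem_Ici hle hle
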